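/- For every integer m ≥ 1, every integer r ≥ 1, every positive integer N, every vector a = (a_1,…,a_r) of nonzero real numbers and every x = (x_1,…,x_r) ∈ ℝ^r, one has the multiplication formula ζ_fml(1−m, a, x) = Σ_{h=0}^{N−1} ζ_fml(1−m, (N a_1, a_2,…,a_r), ((x_1+h)/N, x_2,…,x_r)). -/

import Mathlib

open scoped BigOperators

/-- The formal multiple zeta value `zetaFml m a x = ζ_fml(1 - m, a, x)` of the paper:
`(-1)^r (m-1)! ∑_{l, Σ l i = m + r - 1} ∏_i B_{l i}(x i) * (a i)^(l i - 1) / (l i)!`,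
where `B_l` is the `l`-th Bernoulli polynomial (normalized with `B₁(X) = X - 1/2`)
and `(a i)^(l i - 1)` is an integer (`zpow`) power. -/
noncomputable def zetaFml (m : ℕ) {r : ℕ} (a x : Fin r → ℝ) : ℝ :=
  (-1 : ℝ) ^ r * (Nat.factorial (m - 1)) *
    ∑ l ∈ Finset.Nat.antidiagonalTuple r (m + r - 1),
      ∏ i, Polynomial.aeval (x i) (Polynomial.bernoulli (l i)) * a i ^ ((l i : ℤ) - 1)
        / (Nat.factorial (l i))

open PowerSeries Polynomial

/-- The power-series avatar `∑ Bₙ(t) Xⁿ/n!`. -/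
noncomputable def bernGF (t : ℝ) : PowerSeries ℝ :=
  PowerSeries.mk fun n => Polynomial.aeval t ((1 / n.factorial : ℚ) • Polynomial.bernoulli n)

lemma bernoulli_multiplication (N : ℕ) (hN : 0 < N) (l : ℕ) (x : ℝ) :
    ∑ h ∈ Finset.range N, Polynomial.aeval ((x + h) / N) (Polynomial.bernoulli l)
      = (N : ℝ) ^ ((1 : ℤ) - l) * Polynomial.aeval x (Polynomial.bernoulli l) := by
  have hN' : (N : ℝ) ≠ 0 := Nat.cast_ne_zero.2 hN.ne'
  set E := PowerSeries.exp ℝ with hE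
  have hE1 : E - 1 ≠ 0 := by
    intro h
    have := congrArg (PowerSeries.coeff 1) h
    simp [hE] at this
  have hEN1 : PowerSeries.rescale (N : ℝ) E - 1 ≠ 0 := by
    intro h
    have := congrArg (PowerSeries.coeff 1) h
    simp [hE, PowerSeries.coeff_rescale, hN'] at this
  -- generating function identity
  have hgen : ∀ t : ℝ, bernGF t * (E - 1) = PowerSeries.X * PowerSeries.rescale t E :=
    fun t => Polynomial.bernoulli_generating_function t
  -- main power series identity
  have key : ∑ h ∈ Finset.range N, PowerSeries.rescale (N : ℝ) (bernGF ((x + h) / N))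
      = PowerSeries.C (N : ℝ) * bernGF x := by
    apply mul_right_cancel₀ hEN1
    apply mul_right_cancel₀ hE1
    have step1 : (∑ h ∈ Finset.range N, PowerSeries.rescale (N : ℝ) (bernGF ((x + h) / N)))
        * (PowerSeries.rescale (N : ℝ) E - 1)
        = PowerSeries.C (N : ℝ) * PowerSeries.X * PowerSeries.rescale x E
            * ∑ h ∈ Finset.range N, E ^ h := by
      rw [Finset.sum_mul, Finset.mul_sum]
      refine Finset.sum_congr rfl fun h _ => ?_
      have := congrArg (PowerSeries.rescale (N : ℝ)) (hgen ((x + h) / N))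
      rw [map_mul, map_sub, map_one, map_mul] at this
      rw [this, PowerSeries.rescale_X, PowerSeries.rescale_rescale,
        div_mul_cancel₀ _ hN', PowerSeries.exp_pow_eq_rescale_exp,
        ← PowerSeries.exp_mul_exp_eq_exp_add x (h : ℝ)]
      ring
    calc (∑ h ∈ Finset.range N, PowerSeries.rescale (N : ℝ) (bernGF ((x + h) / N)))
          * (PowerSeries.rescale (N : ℝ) E - 1) * (E - 1)
        = PowerSeries.C (N : ℝ) * PowerSeries.X * PowerSeries.rescale x E
            * ((∑ h ∈ Finset.range N, E ^ h) * (E - 1)) := by rw [step1]; ring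
      _ = PowerSeries.C (N : ℝ) * (PowerSeries.X * PowerSeries.rescale x E)
            * (PowerSeries.rescale (N : ℝ) E - 1) := by
            rw [geom_sum_mul, PowerSeries.exp_pow_eq_rescale_exp]; ring
      _ = PowerSeries.C (N : ℝ) * bernGF x * (PowerSeries.rescale (N : ℝ) E - 1) * (E - 1) := by
            rw [← hgen x]; ring
  -- extract coefficient l
  have hcoeff := congrArg (PowerSeries.coeff l) key
  simp only [map_sum, PowerSeries.coeff_rescale, PowerSeries.coeff_C_mul, bernGF,
    PowerSeries.coeff_mk, map_smul, Rat.smul_def, Rat.cast_div, Rat.cast_one,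
    Rat.cast_natCast] at hcoeff
  have hfac : ((l.factorial : ℝ)) ≠ 0 := Nat.cast_ne_zero.2 l.factorial_ne_zero
  have hsum : (N : ℝ) ^ l * ∑ h ∈ Finset.range N,
      Polynomial.aeval ((x + h) / N) (Polynomial.bernoulli l)
      = (N : ℝ) * Polynomial.aeval x (Polynomial.bernoulli l) := by
    apply mul_left_cancel₀ (one_div_ne_zero hfac)
    calc (1 / (l.factorial : ℝ)) * ((N : ℝ) ^ l * ∑ h ∈ Finset.range N,
          Polynomial.aeval ((x + h) / N) (Polynomial.bernoulli l))
        = ∑ h ∈ Finset.range N, (N : ℝ) ^ l *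
            (1 / (l.factorial : ℝ) * Polynomial.aeval ((x + h) / N) (Polynomial.bernoulli l)) := by
          rw [Finset.mul_sum, Finset.mul_sum]
          exact Finset.sum_congr rfl fun h _ => by ring
      _ = (N : ℝ) * (1 / (l.factorial : ℝ) * Polynomial.aeval x (Polynomial.bernoulli l)) :=
          hcoeff
      _ = (1 / (l.factorial : ℝ)) * ((N : ℝ) * Polynomial.aeval x (Polynomial.bernoulli l)) := by
          ring
  rw [zpow_sub₀ hN', zpow_one, zpow_natCast, div_mul_eq_mul_div,
    eq_div_iff (pow_ne_zero l hN')]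
  linear_combination hsum

theorem zetaFml_mul_formula (m : ℕ) (hm : 1 ≤ m) (r : ℕ) (N : ℕ) (hN : 0 < N)
    (a x : Fin (r + 1) → ℝ) (ha : ∀ i, a i ≠ 0) :
    zetaFml m a x
      = ∑ h ∈ Finset.range N,
          zetaFml m (Function.update a 0 ((N : ℝ) * a 0))
            (Function.update x 0 ((x 0 + (h : ℝ)) / (N : ℝ))) := by
  have hN' : (N : ℝ) ≠ 0 := Nat.cast_ne_zero.2 hN.ne'
  simp only [zetaFml]
  rw [← Finset.mul_sum, Finset.sum_comm]
  congr 1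
  refine Finset.sum_congr rfl fun l _ => ?_
  have htaila : ∀ i : Fin r, Function.update a 0 ((N : ℝ) * a 0) i.succ = a i.succ :=
    fun i => Function.update_of_ne (Fin.succ_ne_zero i) _ _
  have htailx : ∀ h : ℕ, ∀ i : Fin r,
      Function.update x 0 ((x 0 + (h : ℝ)) / (N : ℝ)) i.succ = x i.succ :=
    fun h i => Function.update_of_ne (Fin.succ_ne_zero i) _ _
  simp only [Fin.prod_univ_succ, Function.update_self, htaila]
  simp only [htailx]
  rw [← Finset.sum_mul]
  congr 1
  have key := bernoulli_multiplication N hN (l 0) (x 0)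
  have hz : (N : ℝ) ^ ((1 : ℤ) - l 0) * (N : ℝ) ^ ((l 0 : ℤ) - 1) = 1 := by
    rw [← zpow_add₀ hN']; norm_num
  symm
  calc ∑ h ∈ Finset.range N,
        Polynomial.aeval ((x 0 + (h : ℝ)) / N) (Polynomial.bernoulli (l 0))
          * ((N : ℝ) * a 0) ^ ((l 0 : ℤ) - 1) / (Nat.factorial (l 0))
      = (∑ h ∈ Finset.range N,
          Polynomial.aeval ((x 0 + (h : ℝ)) / N) (Polynomial.bernoulli (l 0)))
          * ((N : ℝ) * a 0) ^ ((l 0 : ℤ) - 1) / (Nat.factorial (l 0)) := by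
        rw [Finset.sum_mul, Finset.sum_div]
    _ = ((N : ℝ) ^ ((1 : ℤ) - l 0) * Polynomial.aeval (x 0) (Polynomial.bernoulli (l 0)))
          * ((N : ℝ) ^ ((l 0 : ℤ) - 1) * a 0 ^ ((l 0 : ℤ) - 1)) / (Nat.factorial (l 0)) := by
        rw [key, mul_zpow]
    _ = ((N : ℝ) ^ ((1 : ℤ) - l 0) * (N : ℝ) ^ ((l 0 : ℤ) - 1))
          * (Polynomial.aeval (x 0) (Polynomial.bernoulli (l 0)) * a 0 ^ ((l 0 : ℤ) - 1))
          / (Nat.factorial (l 0)) := by ring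
    _ = Polynomial.aeval (x 0) (Polynomial.bernoulli (l 0)) * a 0 ^ ((l 0 : ℤ) - 1)
          / (Nat.factorial (l 0)) := by rw [hz, one_mul]
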